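/- arXiv:2207.14634 — 2 statements merged into one kernel-verified Lean document; each statement's English description precedes it below -/
import Mathlib

section
/- Let T_L, T_R, D_L, D_R be reals with 4D_L − T_L² > 0, 4D_R − T_R² > 0, and T_L T_R < 0. Define μ = T_L/√(4D_L − T_L²) + T_R/√(4D_R − T_R²) and c_∞ = T_L (T_L² D_R − T_R² D_L). Then sign(μ) = sign(c_∞). -/
theorem stmt_12 (TL TR DL DR : ℝ)
    (hL : 0 < 4 * DL - TL ^ 2) (hR : 0 < 4 * DR - TR ^ 2)
    (hT : TL * TR < 0) :
    Real.sign (TL / Real.sqrt (4 * DL - TL ^ 2) + TR / Real.sqrt (4 * DR - TR ^ 2))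
      = Real.sign (TL * (TL ^ 2 * DR - TR ^ 2 * DL)) := by
  set sL := Real.sqrt (4 * DL - TL ^ 2) with hsLdef
  set sR := Real.sqrt (4 * DR - TR ^ 2) with hsRdef
  have hsL : 0 < sL := Real.sqrt_pos.2 hL
  have hsR : 0 < sR := Real.sqrt_pos.2 hR
  have hsL2 : sL ^ 2 = 4 * DL - TL ^ 2 := Real.sq_sqrt hL.le
  have hsR2 : sR ^ 2 = 4 * DR - TR ^ 2 := Real.sq_sqrt hR.le
  have hmu : TL / sL + TR / sR = (TL * sR + TR * sL) / (sL * sR) := by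
    field_simp
  rw [hmu]
  set A := TL * sR + TR * sL with hA
  set B := TL * sR - TR * sL with hB
  have hprod : A * B = 4 * (TL ^ 2 * DR - TR ^ 2 * DL) := by
    have h : A * B = TL ^ 2 * sR ^ 2 - TR ^ 2 * sL ^ 2 := by rw [hA, hB]; ring
    rw [h, hsL2, hsR2]; ring
  have hden : 0 < sL * sR := mul_pos hsL hsR
  rcases lt_trichotomy TL 0 with hTL | hTL | hTL
  · have hTR : 0 < TR := by nlinarith
    have hBneg : B < 0 := by rw [hB]; nlinarith
    rcases lt_trichotomy (TL ^ 2 * DR - TR ^ 2 * DL) 0 with hK | hK | hK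
    · have hApos : 0 < A := by nlinarith
      rw [Real.sign_of_pos (div_pos hApos hden),
          Real.sign_of_pos (mul_pos_of_neg_of_neg hTL hK)]
    · have hA0 : A = 0 := by
        have h0 : A * B = 0 := by rw [hprod, hK]; ring
        rcases mul_eq_zero.1 h0 with h | h
        · exact h
        · exact absurd h hBneg.ne
      rw [hA0, zero_div, hK, mul_zero]
    · have hAneg : A < 0 := by nlinarith
      rw [Real.sign_of_neg (div_neg_of_neg_of_pos hAneg hden),
          Real.sign_of_neg (mul_neg_of_neg_of_pos hTL hK)]
  · exfalso; rw [hTL, zero_mul] at hT; exact lt_irrefl 0 hT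
  · have hTR : TR < 0 := by nlinarith
    have hBpos : 0 < B := by rw [hB]; nlinarith
    rcases lt_trichotomy (TL ^ 2 * DR - TR ^ 2 * DL) 0 with hK | hK | hK
    · have hAneg : A < 0 := by nlinarith
      rw [Real.sign_of_neg (div_neg_of_neg_of_pos hAneg hden),
          Real.sign_of_neg (mul_neg_of_pos_of_neg hTL hK)]
    · have hA0 : A = 0 := by
        have h0 : A * B = 0 := by rw [hprod, hK]; ring
        rcases mul_eq_zero.1 h0 with h | h
        · exact h
        · exact absurd h hBpos.ne'
      rw [hA0, zero_div, hK, mul_zero]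
    · have hApos : 0 < A := by nlinarith
      rw [Real.sign_of_pos (div_pos hApos hden),
          Real.sign_of_pos (mul_pos hTL hK)]
end

section
/- Suppose y_L, y_R : J → ℝ are differentiable on an open interval J ⊆ (0,∞), W_L(y) = D_L y² − a_L T_L y + a_L², W_R(y) = D_R y² − a_R T_R y + a_R², and they satisfy y_L(y₀) W_L(y₀) y_L'(y₀) = y₀ W_L(y_L(y₀)) and y_R(y₀) W_R(y₀) y_R'(y₀) = y₀ W_R(y_R(y₀)), with y_L(y₀) < 0, y_R(y₀) < 0, W_L(y₀) > 0, W_R(y₀) > 0 on J. If y₀* ∈ J satisfies y_R(y₀*) = y_L(y₀*) =: y₁*, then sign(y_R'(y₀*) − y_L'(y₀*)) = sign(c₀ + c₁ y₀* y₁* + c₂ (y₀* + y₁*)), where c₀ = a_R a_L (a_R T_L − a_L T_R), c₁ = a_R T_R D_L − a_L T_L D_R, c₂ = a_L² D_R − a_R² D_L. -/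
lemma sign_pos_mul (k x : ℝ) (hk : 0 < k) : Real.sign (k * x) = Real.sign x := by
  rcases lt_trichotomy x 0 with h | h | h
  · rw [Real.sign_of_neg h, Real.sign_of_neg (mul_neg_of_pos_of_neg hk h)]
  · simp [h]
  · rw [Real.sign_of_pos h, Real.sign_of_pos (mul_pos hk h)]

theorem stmt_14 (aL aR TL TR DL DR : ℝ) (WL WR : ℝ → ℝ)
    (hWL : ∀ y, WL y = DL * y ^ 2 - aL * TL * y + aL ^ 2)
    (hWR : ∀ y, WR y = DR * y ^ 2 - aR * TR * y + aR ^ 2)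
    (J : Set ℝ) (hJopen : IsOpen J) (hJconn : J.OrdConnected)
    (hJpos : J ⊆ Set.Ioi (0 : ℝ))
    (yL yR : ℝ → ℝ)
    (hdL : ∀ y₀ ∈ J, DifferentiableAt ℝ yL y₀)
    (hdR : ∀ y₀ ∈ J, DifferentiableAt ℝ yR y₀)
    (hodeL : ∀ y₀ ∈ J, yL y₀ * WL y₀ * deriv yL y₀ = y₀ * WL (yL y₀))
    (hodeR : ∀ y₀ ∈ J, yR y₀ * WR y₀ * deriv yR y₀ = y₀ * WR (yR y₀))
    (hLneg : ∀ y₀ ∈ J, yL y₀ < 0) (hRneg : ∀ y₀ ∈ J, yR y₀ < 0)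
    (hWLpos : ∀ y₀ ∈ J, 0 < WL y₀) (hWRpos : ∀ y₀ ∈ J, 0 < WR y₀)
    (c₀ c₁ c₂ : ℝ)
    (hc₀ : c₀ = aR * aL * (aR * TL - aL * TR))
    (hc₁ : c₁ = aR * TR * DL - aL * TL * DR)
    (hc₂ : c₂ = aL ^ 2 * DR - aR ^ 2 * DL)
    (y₀s y₁s : ℝ) (hy₀ : y₀s ∈ J) (heq : yR y₀s = yL y₀s) (hy₁ : y₁s = yL y₀s) :
    Real.sign (deriv yR y₀s - deriv yL y₀s)
      = Real.sign (c₀ + c₁ * y₀s * y₁s + c₂ * (y₀s + y₁s)) := by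
  have hy0pos : 0 < y₀s := hJpos hy₀
  have hy1neg : y₁s < 0 := hy₁ ▸ hLneg y₀s hy₀
  have hWL0 : 0 < WL y₀s := hWLpos y₀s hy₀
  have hWR0 : 0 < WR y₀s := hWRpos y₀s hy₀
  have hL := hodeL y₀s hy₀
  have hR := hodeR y₀s hy₀
  rw [heq] at hR
  rw [← hy₁] at hL hR
  set dL := deriv yL y₀s
  set dR := deriv yR y₀s
  set P := c₀ + c₁ * y₀s * y₁s + c₂ * (y₀s + y₁s) with hP
  have hM : y₁s * WL y₀s * WR y₀s < 0 := by
    have := mul_pos hWL0 hWR0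
    nlinarith
  have key : (dR - dL) * (y₁s * WL y₀s * WR y₀s) = -(y₀s * (y₀s - y₁s)) * P := by
    have e1 : dR * (y₁s * WL y₀s * WR y₀s) = (y₀s * WR y₁s) * WL y₀s := by
      nlinarith [hR]
    have e2 : dL * (y₁s * WL y₀s * WR y₀s) = (y₀s * WL y₁s) * WR y₀s := by
      nlinarith [hL]
    have : (dR - dL) * (y₁s * WL y₀s * WR y₀s)
        = y₀s * (WR y₁s * WL y₀s - WL y₁s * WR y₀s) := by ring_nf; nlinarith [e1, e2]
    rw [this, hWL y₀s, hWL y₁s, hWR y₀s, hWR y₁s, hP, hc₀, hc₁, hc₂]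
    ring
  have hMpos : 0 < -(y₁s * WL y₀s * WR y₀s) := by linarith
  have hd : dR - dL = (y₀s * (y₀s - y₁s) / (-(y₁s * WL y₀s * WR y₀s))) * P := by
    rw [div_mul_eq_mul_div, eq_div_iff (ne_of_gt hMpos)]
    linear_combination -key
  rw [hd]
  exact sign_pos_mul _ _ (div_pos (mul_pos hy0pos (by linarith)) hMpos)
end
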